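/- Each coordinate function x_i : [0,1] → [0,1] of the n-dimensional Peano curve is continuous; more precisely, for any t ∈ [0,1] and k ∈ ℕ, if u ∈ [0,1] has a ternary representation agreeing with one of t in the first i + kn digits, then |x_i(t) − x_i(u)| ≤ 3^{−(k+1)}. -/

import Mathlib

open scoped BigOperators ENNReal

/-- `Φ` : evaluation of a ternary digit sequence (digits at indices `1,2,3,…`). -/
noncomputable def Phi (t : ℕ → ℕ) : ℝ := ∑' k : ℕ, (t (k + 1) : ℝ) / 3 ^ (k + 1)

/-- A sequence of ternary digits (elements of `D = {0,1,2}`). -/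
def IsDigitSeq (t : ℕ → ℕ) : Prop := ∀ k, t k ≤ 2

/-- `S_{i+jn}(𝐭) = ∑_{k=1}^{i+jn} t_k − ∑_{s=0}^{j} t_{i+sn}`. -/
def S (n i j : ℕ) (t : ℕ → ℕ) : ℤ :=
  (∑ k ∈ Finset.Icc 1 (i + j * n), (t k : ℤ)) -
    ∑ s ∈ Finset.range (j + 1), (t (i + s * n) : ℤ)

/-- The operator `ξ(a) = 2 − a`, as a permutation of `ℝ` (so that integer powers
`ξ^m`, `m : ℤ`, make sense). -/
def xiPerm : Equiv.Perm ℝ :=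
  ⟨fun a => 2 - a, fun a => 2 - a, fun a => by dsimp; ring, fun a => by dsimp; ring⟩

/-- `x_i(𝐭) = ∑_{j=0}^∞ ξ^{S_{i+jn}(𝐭)}(t_{i+jn}) / 3^{j+1}`. -/
noncomputable def xcoord (n i : ℕ) (t : ℕ → ℕ) : ℝ :=
  ∑' j : ℕ, ((xiPerm ^ (S n i j t)) ((t (i + j * n) : ℝ))) / 3 ^ (j + 1)

/-- The canonical ternary digit expansion of `t ∈ [0,1]` (all digits `2` for `t = 1`). -/
noncomputable def ternaryDigit (t : ℝ) (k : ℕ) : ℕ :=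
  if t = 1 then 2 else (⌊t * 3 ^ k⌋).toNat % 3

/-- The `i`-th coordinate function of the `n`-dimensional Peano curve, as a function
on `[0,1]` (via the canonical ternary representation; by well-definedness this agrees
with `xcoord` on any ternary representation). -/
noncomputable def peanoCoord (n i : ℕ) (t : ℝ) : ℝ := xcoord n i (ternaryDigit t)

-- ### xiPerm lemmas

lemma xiPerm_apply (x : ℝ) : xiPerm x = 2 - x := rfl

lemma xiPerm_mul_self : xiPerm * xiPerm = 1 := by
  ext x
  simp [xiPerm, Equiv.Perm.mul_apply]

lemma xiPerm_zpow (s : ℤ) : xiPerm ^ s = if Even s then 1 else xiPerm := by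
  rcases Int.even_or_odd s with ⟨t, ht⟩ | ⟨t, ht⟩
  · have he : Even s := ⟨t, ht⟩
    rw [if_pos he, ht, ← two_mul, zpow_mul]
    have h2 : xiPerm ^ (2 : ℤ) = 1 := by
      rw [show (2:ℤ) = 1 + 1 from rfl, zpow_add, zpow_one, xiPerm_mul_self]
    rw [h2, one_zpow]
  · have ho : ¬ Even s := by
      rw [ht]; simp [Int.even_add_one, parity_simps]
    rw [if_neg ho, ht, zpow_add, zpow_mul]
    have h2 : xiPerm ^ (2 : ℤ) = 1 := by
      rw [show (2:ℤ) = 1 + 1 from rfl, zpow_add, zpow_one, xiPerm_mul_self]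
    rw [h2, one_zpow, one_mul, zpow_one]

lemma xiPerm_zpow_apply (s : ℤ) (x : ℝ) :
    (xiPerm ^ s) x = if Even s then x else 2 - x := by
  rw [xiPerm_zpow]
  split <;> rfl

lemma xiPerm_zpow_congr {s t : ℤ} (h : Even (s - t)) : xiPerm ^ s = xiPerm ^ t := by
  rw [xiPerm_zpow, xiPerm_zpow, if_congr (Int.even_sub.mp h) rfl rfl]

lemma xiPerm_zpow_mem {x : ℝ} (s : ℤ) (h0 : 0 ≤ x) (h2 : x ≤ 2) :
    0 ≤ (xiPerm ^ s) x ∧ (xiPerm ^ s) x ≤ 2 := by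
  rw [xiPerm_zpow_apply]
  split <;> constructor <;> linarith

-- ### summability

lemma summable_of_abs_le {f : ℕ → ℝ} (C : ℝ) (h : ∀ j, |f j| ≤ C * (1/3)^j) :
    Summable f :=
  Summable.of_norm_bounded ((summable_geometric_of_lt_one (by norm_num) (by norm_num)).mul_left C) h

lemma xcoord_term_mem (n i : ℕ) {t : ℕ → ℕ} (ht : IsDigitSeq t) (j : ℕ) :
    0 ≤ (xiPerm ^ (S n i j t)) ((t (i + j * n) : ℝ)) ∧
      (xiPerm ^ (S n i j t)) ((t (i + j * n) : ℝ)) ≤ 2 :=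
  xiPerm_zpow_mem _ (Nat.cast_nonneg _) (by exact_mod_cast ht (i + j * n))

lemma summable_xcoord (n i : ℕ) {t : ℕ → ℕ} (ht : IsDigitSeq t) :
    Summable (fun j : ℕ => ((xiPerm ^ (S n i j t)) ((t (i + j * n) : ℝ))) / 3 ^ (j + 1)) := by
  apply summable_of_abs_le (2/3)
  intro j
  obtain ⟨h0, h2⟩ := xcoord_term_mem n i ht j
  rw [abs_div, abs_of_nonneg h0, abs_of_nonneg (by positivity : (0:ℝ) ≤ 3 ^ (j+1))]
  rw [div_pow, one_pow, pow_succ]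
  rw [div_le_iff₀ (by positivity)]
  have : (2:ℝ)/3 * (1 / 3 ^ j) * (3 ^ j * 3) = 2 := by
    field_simp
  rw [this]
  exact h2

lemma summable_phi {t : ℕ → ℕ} (ht : IsDigitSeq t) :
    Summable (fun k : ℕ => (t (k+1) : ℝ) / 3 ^ (k + 1)) := by
  apply summable_of_abs_le (2/3)
  intro j
  have h2 : (t (j+1) : ℝ) ≤ 2 := by exact_mod_cast ht (j+1)
  rw [abs_div, abs_of_nonneg (Nat.cast_nonneg _), abs_of_nonneg (by positivity : (0:ℝ) ≤ 3 ^ (j+1))]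
  rw [div_pow, one_pow, pow_succ, div_le_iff₀ (by positivity)]
  have : (2:ℝ)/3 * (1 / 3 ^ j) * (3 ^ j * 3) = 2 := by field_simp
  rw [this]
  exact h2

-- geometric computation helper
lemma tsum_tail_geom (c : ℕ) : ∑' j : ℕ, (1:ℝ) / 3 ^ (j + c) = (3 / 2) / 3 ^ c := by
  have : ∀ j : ℕ, (1:ℝ) / 3 ^ (j + c) = (1 / 3 ^ c) * (1/3)^j := by
    intro j
    rw [pow_add, div_pow, one_pow]
    field_simp
  rw [tsum_congr this, tsum_mul_left, tsum_geometric_of_lt_one (by norm_num) (by norm_num)]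
  norm_num
  ring

-- ### congruence lemmas

lemma S_congr {n i : ℕ} (hi : 1 ≤ i) (j : ℕ) {a b : ℕ → ℕ}
    (h : ∀ m, 1 ≤ m → m ≤ i + j * n → a m = b m) : S n i j a = S n i j b := by
  unfold S
  congr 1
  · refine Finset.sum_congr rfl (fun k hk => ?_)
    rw [Finset.mem_Icc] at hk
    rw [h k hk.1 hk.2]
  · refine Finset.sum_congr rfl (fun s hs => ?_)
    rw [Finset.mem_range] at hs
    have h1 : 1 ≤ i + s * n := le_trans hi (Nat.le_add_right _ _)
    have h2 : i + s * n ≤ i + j * n :=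
      Nat.add_le_add_left (Nat.mul_le_mul_right n (Nat.lt_succ_iff.mp hs)) i
    rw [h _ h1 h2]

lemma xcoord_congr {n i : ℕ} (hi : 1 ≤ i) {a b : ℕ → ℕ}
    (h : ∀ m, 1 ≤ m → a m = b m) : xcoord n i a = xcoord n i b := by
  unfold xcoord
  refine tsum_congr (fun j => ?_)
  rw [S_congr hi j (fun m h1 _ => h m h1), h (i + j * n) (le_trans hi (Nat.le_add_right _ _))]

-- ### tail bound

set_option maxHeartbeats 1000000 in
lemma xcoord_dist {n i : ℕ} (hi : 1 ≤ i) (k : ℕ) {a b : ℕ → ℕ}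
    (ha : IsDigitSeq a) (hb : IsDigitSeq b)
    (h : ∀ m, 1 ≤ m → m ≤ i + k * n → a m = b m) :
    |xcoord n i a - xcoord n i b| ≤ 1 / 3 ^ (k + 1) := by
  set f : ℕ → ℝ := fun j => ((xiPerm ^ (S n i j a)) ((a (i + j * n) : ℝ))) / 3 ^ (j + 1) with hf
  set g : ℕ → ℝ := fun j => ((xiPerm ^ (S n i j b)) ((b (i + j * n) : ℝ))) / 3 ^ (j + 1) with hg
  have hsf : Summable f := summable_xcoord n i ha
  have hsg : Summable g := summable_xcoord n i hb
  have hD : Summable (fun j => f j - g j) := hsf.sub hsg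
  have hsub : xcoord n i a - xcoord n i b = ∑' j, (f j - g j) := (Summable.tsum_sub hsf hsg).symm
  -- terms with j ≤ k agree
  have hzero : ∀ j, j ≤ k → f j - g j = 0 := by
    intro j hj
    have hmul : i + j * n ≤ i + k * n := Nat.add_le_add_left (Nat.mul_le_mul_right n hj) i
    have hS : S n i j a = S n i j b := S_congr hi j (fun m h1 h2 => h m h1 (h2.trans hmul))
    have hd : a (i + j * n) = b (i + j * n) :=
      h _ (le_trans hi (Nat.le_add_right _ _)) hmul
    simp [hf, hg, hS, hd]
  have hsplit := hD.sum_add_tsum_nat_add (k + 1)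
  have hfin : ∑ j ∈ Finset.range (k + 1), (f j - g j) = 0 :=
    Finset.sum_eq_zero (fun j hj => hzero j (Nat.lt_succ_iff.mp (Finset.mem_range.mp hj)))
  rw [hsub, ← hsplit, hfin, zero_add]
  -- bound the tail
  have habs : ∀ j : ℕ, |f (j + (k+1)) - g (j + (k+1))| ≤ 2 / 3 ^ (j + (k + 1) + 1) := by
    intro j
    obtain ⟨ha0, ha2⟩ := xcoord_term_mem n i ha (j + (k+1))
    obtain ⟨hb0, hb2⟩ := xcoord_term_mem n i hb (j + (k+1))
    rw [hf, hg]
    dsimp only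
    rw [div_sub_div_same, abs_div, abs_of_nonneg (by positivity : (0:ℝ) ≤ 3 ^ (j + (k+1) + 1))]
    gcongr
    rw [abs_le]
    constructor <;> linarith
  have hsum2 : Summable (fun j => f (j + (k+1)) - g (j + (k+1))) :=
    (summable_nat_add_iff (k+1)).mpr hD
  have hB : Summable (fun j : ℕ => (2:ℝ) / 3 ^ (j + (k+2))) := by
    apply summable_of_abs_le ((2:ℝ)/3^(k+2))
    intro j
    rw [abs_of_nonneg (by positivity), pow_add, div_pow, one_pow]
    rw [div_mul_div_comm]
    rw [div_le_div_iff₀ (by positivity) (by positivity)]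
    ring_nf
    rw [mul_comm]
  have hBval : ∑' j : ℕ, (2:ℝ) / 3 ^ (j + (k+2)) = 1 / 3 ^ (k+1) := by
    have h1 : ∀ j : ℕ, (2:ℝ) / 3 ^ (j + (k+2)) = 2 * (1 / 3 ^ (j + (k+2))) := by
      intro j; ring
    rw [tsum_congr h1, tsum_mul_left, tsum_tail_geom]
    rw [pow_succ]
    field_simp
  calc |∑' j, (f (j + (k+1)) - g (j + (k+1)))|
      ≤ ∑' j, |f (j + (k+1)) - g (j + (k+1))| := by
        simpa [Real.norm_eq_abs] using norm_tsum_le_tsum_norm (f := fun j => f (j + (k+1)) - g (j + (k+1))) (by simpa [Real.norm_eq_abs] using hsum2.abs)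
    _ ≤ ∑' j : ℕ, (2:ℝ) / 3 ^ (j + (k+2)) := by
        apply Summable.tsum_le_tsum ?_ hsum2.abs hB
        intro j
        have := habs j
        have he : j + (k+1) + 1 = j + (k+2) := by omega
        rw [he] at this
        exact this
    _ = 1 / 3 ^ (k+1) := hBval

-- ### the canonical expansion

lemma ternaryDigit_isDigitSeq (t : ℝ) : IsDigitSeq (ternaryDigit t) := by
  intro k
  unfold ternaryDigit
  split
  · exact le_refl 2
  · exact Nat.lt_succ_iff.mp (Nat.mod_lt _ (by norm_num))

lemma phi_ternaryDigit {t : ℝ} (h0 : 0 ≤ t) (h1 : t ≤ 1) : Phi (ternaryDigit t) = t := by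
  rcases eq_or_lt_of_le h1 with h | h
  · subst h
    unfold Phi
    have hd : ∀ k : ℕ, ((ternaryDigit 1 (k+1) : ℝ)) / 3 ^ (k+1) = 2 * (1 / 3 ^ (k + 1)) := by
      intro k
      unfold ternaryDigit
      rw [if_pos rfl]
      push_cast; ring
    rw [tsum_congr hd, tsum_mul_left, tsum_tail_geom]
    norm_num
  · have hne : t ≠ 1 := ne_of_lt h
    set F : ℕ → ℤ := fun k => ⌊t * 3 ^ k⌋ with hF
    have hF0 : ∀ k, 0 ≤ F k := fun k => Int.floor_nonneg.mpr (by positivity)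
    have hFz : F 0 = 0 := by
      simp only [hF, pow_zero, mul_one]
      rw [Int.floor_eq_zero_iff]
      exact ⟨h0, h⟩
    have key : ∀ k : ℕ, ((ternaryDigit t (k+1) : ℝ)) = (F (k+1) : ℝ) - 3 * F k := by
      intro k
      have hr0 : 3 * F k ≤ F (k+1) := by
        rw [hF]
        apply Int.le_floor.mpr
        push_cast
        have := Int.floor_le (t * 3 ^ k)
        calc (3:ℝ) * ⌊t * 3 ^ k⌋ ≤ 3 * (t * 3 ^ k) := by linarith
          _ = t * 3 ^ (k+1) := by ring
      have hr3 : F (k+1) < 3 * F k + 3 := by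
        rw [hF]
        apply Int.floor_lt.mpr
        push_cast
        have := Int.lt_floor_add_one (t * 3 ^ k)
        calc t * 3 ^ (k+1) = 3 * (t * 3 ^ k) := by ring
          _ < 3 * (⌊t * 3 ^ k⌋ + 1) := by linarith
          _ = 3 * ⌊t * 3 ^ k⌋ + 3 := by ring
      have hd : (ternaryDigit t (k+1) : ℤ) = F (k+1) - 3 * F k := by
        unfold ternaryDigit
        rw [if_neg hne]
        have h1 : ((((F (k+1)).toNat % 3 : ℕ)) : ℤ) = (F (k+1)) % 3 := by
          push_cast
          rw [Int.toNat_of_nonneg (hF0 (k+1))]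
        have h2 : F (k+1) % 3 = F (k+1) - 3 * F k := by omega
        rw [show (⌊t * 3 ^ (k+1)⌋).toNat = (F (k+1)).toNat from rfl, h1, h2]
      exact_mod_cast hd
    -- partial sums telescope
    have hpart : ∀ K : ℕ, ∑ k ∈ Finset.range K, ((ternaryDigit t (k+1) : ℝ)) / 3 ^ (k+1)
        = (F K : ℝ) / 3 ^ K := by
      intro K
      have : ∀ k ∈ Finset.range K, ((ternaryDigit t (k+1) : ℝ)) / 3 ^ (k+1)
          = (F (k+1) : ℝ) / 3 ^ (k+1) - (F k : ℝ) / 3 ^ k := by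
        intro k _
        rw [key k]
        rw [sub_div]
        congr 1
        rw [pow_succ]
        field_simp
      rw [Finset.sum_congr rfl this, Finset.sum_range_sub (fun k => (F k : ℝ) / 3 ^ k)]
      rw [hFz]
      norm_num
    -- the partial sums converge to t
    have htend : Filter.Tendsto (fun K : ℕ => ∑ k ∈ Finset.range K, ((ternaryDigit t (k+1) : ℝ)) / 3 ^ (k+1))
        Filter.atTop (nhds t) := by
      simp only [hpart]
      apply tendsto_of_tendsto_of_tendsto_of_le_of_le
        (g := fun K : ℕ => t - (1/3 : ℝ) ^ K) (h := fun _ : ℕ => t)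
      · simpa using (tendsto_const_nhds (x := t)).sub
          (tendsto_pow_atTop_nhds_zero_of_lt_one (by norm_num : (0:ℝ) ≤ 1/3) (by norm_num))
      · exact tendsto_const_nhds
      · intro K
        dsimp only
        rw [le_div_iff₀ (by positivity)]
        have hlt : t * 3 ^ K - 1 < (F K : ℝ) := by
          rw [hF]
          exact Int.sub_one_lt_floor _
        have hone : (1/3:ℝ)^K * 3^K = 1 := by
          rw [← mul_pow]; norm_num
        have hexpand : (t - (1/3:ℝ)^K) * 3^K = t * 3^K - (1/3:ℝ)^K * 3^K := by ring
        rw [hexpand, hone]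
        linarith
      · intro K
        dsimp only
        rw [div_le_iff₀ (by positivity), hF]
        exact Int.floor_le (t * 3 ^ K)
    have hs : HasSum (fun k : ℕ => ((ternaryDigit t (k+1) : ℝ)) / 3 ^ (k+1)) t := by
      rw [hasSum_iff_tendsto_nat_of_nonneg (fun k => by positivity)]
      exact htend
    exact hs.tsum_eq

-- ### structure of two representations of the same number

set_option maxHeartbeats 2000000 in
lemma rep_structure {a b : ℕ → ℕ} (ha : IsDigitSeq a) (hb : IsDigitSeq b)
    (hPhi : Phi a = Phi b) {m : ℕ} (hm : 1 ≤ m)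
    (hmin : ∀ k, 1 ≤ k → k < m → a k = b k) (hne : b m < a m) :
    a m = b m + 1 ∧ ∀ k, m < k → a k = 0 ∧ b k = 2 := by
  set f : ℕ → ℝ := fun k => (a (k+1) : ℝ) / 3 ^ (k+1) with hf
  set g : ℕ → ℝ := fun k => (b (k+1) : ℝ) / 3 ^ (k+1) with hg
  have hsf : Summable f := summable_phi ha
  have hsg : Summable g := summable_phi hb
  have hD : Summable (fun k => f k - g k) := hsf.sub hsg
  have hzero : ∑' k, (f k - g k) = 0 := by
    rw [Summable.tsum_sub hsf hsg]
    have : Phi a - Phi b = 0 := by rw [hPhi]; ring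
    exact this
  have hsplit := hD.sum_add_tsum_nat_add (m - 1)
  have hfin : ∑ k ∈ Finset.range (m - 1), (f k - g k) = 0 := by
    apply Finset.sum_eq_zero
    intro k hk
    have hk' : k + 1 < m := by
      have := Finset.mem_range.mp hk; omega
    simp [hf, hg, hmin (k+1) (by omega) hk']
  have htail0 : ∑' k, (f (k + (m-1)) - g (k + (m-1))) = 0 := by
    have := hsplit
    rw [hfin, zero_add] at this
    rw [this, hzero]
  have hDtail : Summable (fun k => f (k + (m-1)) - g (k + (m-1))) :=
    (summable_nat_add_iff (m-1)).mpr hD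
  have hzsplit := hDtail.tsum_eq_zero_add
  rw [htail0] at hzsplit
  simp only [zero_add] at hzsplit
  -- hzsplit : 0 = (f (m-1) - g (m-1)) + ∑' k, (f (k+1+(m-1)) - g (k+1+(m-1)))
  have hmm : m - 1 + 1 = m := by omega
  have hidx : ∀ k : ℕ, k + 1 + (m - 1) + 1 = k + 1 + m := by omega
  -- let E k := g-part minus a-part of the tail
  set E : ℕ → ℝ := fun k => (b (k+1+m) : ℝ) / 3 ^ (k+1+m) - (a (k+1+m) : ℝ) / 3 ^ (k+1+m) with hE
  have htail_eq : ∀ k : ℕ, f (k + 1 + (m-1)) - g (k + 1 + (m-1)) = -E k := by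
    intro k
    simp only [hf, hg, hE, hidx k]
    ring
  have hEsum : Summable E := by
    have := hDtail.neg
    have h2 : Summable (fun k => -(f (k + 1 + (m-1)) - g (k + 1 + (m-1)))) :=
      ((summable_nat_add_iff 1).mpr hDtail).neg
    apply h2.congr
    intro k
    rw [htail_eq k]
    ring
  have hmain : (a m : ℝ) / 3 ^ m - (b m : ℝ) / 3 ^ m = ∑' k, E k := by
    have h1 : f (m-1) - g (m-1) = (a m : ℝ) / 3 ^ m - (b m : ℝ) / 3 ^ m := by
      simp only [hf, hg, hmm]
    have h2 : ∑' k, (f (k + 1 + (m-1)) - g (k + 1 + (m-1))) = -∑' k, E k := by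
      rw [tsum_congr htail_eq, tsum_neg]
    rw [h1, h2] at hzsplit
    linarith
  -- bound function
  set B : ℕ → ℝ := fun k => (2:ℝ) / 3 ^ (k+1+m) with hB
  have hBsum : Summable B := by
    apply summable_of_abs_le ((2:ℝ)/3^(1+m))
    intro j
    rw [hB]
    simp only
    rw [abs_of_nonneg (by positivity)]
    rw [show j+1+m = j+(1+m) by omega, pow_add, div_pow, one_pow]
    rw [div_mul_div_comm]
    rw [div_le_div_iff₀ (by positivity) (by positivity)]
    ring_nf
    rw [mul_comm]
  have hBval : ∑' k, B k = 1 / 3 ^ m := by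
    have h1 : ∀ k : ℕ, B k = 2 * ((1:ℝ) / 3 ^ (k + (1+m))) := by
      intro k
      rw [hB]
      simp only
      rw [show k+1+m = k+(1+m) by omega]
      ring
    rw [tsum_congr h1, tsum_mul_left, tsum_tail_geom]
    rw [pow_add]
    field_simp
  have hEleB : ∀ k, E k ≤ B k := by
    intro k
    rw [hE, hB]
    simp only
    have hb2 : (b (k+1+m) : ℝ) ≤ 2 := by exact_mod_cast hb (k+1+m)
    have ha0 : (0:ℝ) ≤ (a (k+1+m) : ℝ) := Nat.cast_nonneg _
    rw [div_sub_div_same, div_le_div_iff₀ (by positivity) (by positivity)]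
    nlinarith [pow_pos (show (0:ℝ) < 3 by norm_num) (k+1+m)]
  have hEB : ∑' k, E k ≤ 1 / 3 ^ m := by
    rw [← hBval]
    exact Summable.tsum_le_tsum hEleB hEsum hBsum
  have hone : (1:ℝ) ≤ (a m : ℝ) - (b m : ℝ) := by
    have h' : b m + 1 ≤ a m := hne
    have h'' : ((b m : ℕ) : ℝ) + 1 ≤ ((a m : ℕ) : ℝ) := by exact_mod_cast h'
    linarith
  have hlow : 1 / 3 ^ m ≤ (a m : ℝ) / 3 ^ m - (b m : ℝ) / 3 ^ m := by
    rw [div_sub_div_same, div_le_div_iff₀ (by positivity) (by positivity)]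
    nlinarith [pow_pos (show (0:ℝ) < 3 by norm_num) m]
  have hsum_eq : ∑' k, E k = 1 / 3 ^ m := le_antisymm hEB (hmain ▸ hlow)
  -- termwise equality
  have hterm : ∀ k, E k = B k := by
    intro k
    by_contra hc
    have hlt : E k < B k := lt_of_le_of_ne (hEleB k) hc
    have := Summable.tsum_lt_tsum hEleB hlt hEsum hBsum
    rw [hsum_eq, hBval] at this
    exact lt_irrefl _ this
  constructor
  · -- a m = b m + 1
    have : (a m : ℝ) / 3 ^ m - (b m : ℝ) / 3 ^ m = 1 / 3 ^ m := by rw [hmain, hsum_eq]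
    have h3 : (a m : ℝ) - (b m : ℝ) = 1 := by
      rw [div_sub_div_same] at this
      field_simp at this
      linarith
    have : (a m : ℝ) = (b m : ℝ) + 1 := by linarith
    exact_mod_cast this
  · -- tails
    intro k hk
    have hk' : k = (k - m - 1) + 1 + m := by omega
    have := hterm (k - m - 1)
    rw [hE, hB] at this
    simp only at this
    rw [← hk'] at this
    have hb2 : (b k : ℝ) ≤ 2 := by exact_mod_cast hb k
    have ha0 : (0:ℝ) ≤ (a k : ℝ) := Nat.cast_nonneg _
    have hp : (0:ℝ) < 3 ^ k := by positivity
    rw [div_sub_div_same] at this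
    have heq : (b k : ℝ) - (a k : ℝ) = 2 := by
      field_simp at this
      linarith
    constructor
    · have : (a k : ℝ) = 0 := by linarith [heq, hb2]
      exact_mod_cast this
    · have : (b k : ℝ) = 2 := by linarith [heq, ha0]
      exact_mod_cast this

-- ### well-definedness of xcoord

set_option maxHeartbeats 2000000 in
lemma xcoord_eq_of_structure {n i : ℕ} (hn : 1 ≤ n) (hi : 1 ≤ i) {a b : ℕ → ℕ}
    (ha : IsDigitSeq a) (hb : IsDigitSeq b) {m : ℕ} (hm : 1 ≤ m)
    (hlt : ∀ k, 1 ≤ k → k < m → a k = b k) (hm1 : a m = b m + 1)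
    (htail : ∀ k, m < k → a k = 0 ∧ b k = 2) :
    xcoord n i a = xcoord n i b := by
  -- sums of digits over initial segments
  have SA : ∀ M, m ≤ M → ∑ k ∈ Finset.Icc 1 M, (a k : ℤ) = ∑ k ∈ Finset.Icc 1 m, (a k : ℤ) := by
    intro M hM
    refine (Finset.sum_subset (Finset.Icc_subset_Icc_right hM) ?_).symm
    intro x hx hnx
    rw [Finset.mem_Icc] at hx hnx
    have hxm : m < x := by omega
    rw [(htail x hxm).1]
    norm_num
  have SB : ∀ M, m ≤ M → ∑ k ∈ Finset.Icc 1 M, (b k : ℤ)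
      = ∑ k ∈ Finset.Icc 1 m, (b k : ℤ) + 2 * ((M : ℤ) - (m : ℤ)) := by
    intro M hM
    induction M, hM using Nat.le_induction with
    | base => simp
    | succ M hM ih =>
      rw [Finset.sum_Icc_succ_top (by omega : 1 ≤ M + 1), ih, (htail (M+1) (by omega)).2]
      push_cast
      ring
  have SAB : ∑ k ∈ Finset.Icc 1 m, (a k : ℤ) = ∑ k ∈ Finset.Icc 1 m, (b k : ℤ) + 1 := by
    obtain ⟨m', rfl⟩ : ∃ m', m = m' + 1 := ⟨m - 1, by omega⟩
    rw [Finset.sum_Icc_succ_top (by omega : 1 ≤ m' + 1),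
        Finset.sum_Icc_succ_top (by omega : 1 ≤ m' + 1)]
    have hcon : ∑ k ∈ Finset.Icc 1 m', (a k : ℤ) = ∑ k ∈ Finset.Icc 1 m', (b k : ℤ) :=
      Finset.sum_congr rfl (fun k hk => by
        rw [Finset.mem_Icc] at hk
        rw [hlt k hk.1 (by omega)])
    rw [hcon, hm1]
    push_cast
    ring
  set f : ℕ → ℝ := fun j => ((xiPerm ^ (S n i j a)) ((a (i + j * n) : ℝ))) / 3 ^ (j + 1) with hf
  set g : ℕ → ℝ := fun j => ((xiPerm ^ (S n i j b)) ((b (i + j * n) : ℝ))) / 3 ^ (j + 1) with hg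
  have hsf : Summable f := summable_xcoord n i ha
  have hsg : Summable g := summable_xcoord n i hb
  by_cases hcase : ∃ j1, i + j1 * n = m
  · -- the position m is one of the sampled positions
    obtain ⟨j1, hj1⟩ := hcase
    have hpos : ∀ {s j : ℕ}, s ≤ j → i + s * n ≤ i + j * n :=
      fun {s j} hs => Nat.add_le_add_left (Nat.mul_le_mul_right n hs) i
    have hposlt : ∀ {s : ℕ}, j1 < s → m < i + s * n := by
      intro s hs
      have h1 : (j1 + 1) * n ≤ s * n := Nat.mul_le_mul_right n (by omega)
      have h2 : j1 * n + n ≤ s * n := by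
        calc j1 * n + n = (j1 + 1) * n := by ring
          _ ≤ s * n := h1
      omega
    have hposlt' : ∀ {s : ℕ}, s < j1 → i + s * n < m := by
      intro s hs
      have h1 : (s + 1) * n ≤ j1 * n := Nat.mul_le_mul_right n (by omega)
      have h2 : s * n + n ≤ j1 * n := by
        calc s * n + n = (s + 1) * n := by ring
          _ ≤ j1 * n := h1
      omega
    have TA : ∀ j, j1 ≤ j → ∑ s ∈ Finset.range (j+1), (a (i + s * n) : ℤ)
        = ∑ s ∈ Finset.range (j1+1), (a (i + s * n) : ℤ) := by
      intro j hj
      refine (Finset.sum_subset (Finset.range_subset_range.mpr (by omega)) ?_).symm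
      intro s hs hns
      rw [Finset.mem_range] at hs hns
      rw [(htail _ (hposlt (by omega))).1]
      norm_num
    have TB : ∀ j, j1 ≤ j → ∑ s ∈ Finset.range (j+1), (b (i + s * n) : ℤ)
        = ∑ s ∈ Finset.range (j1+1), (b (i + s * n) : ℤ) + 2 * ((j : ℤ) - (j1 : ℤ)) := by
      intro j hj
      induction j, hj using Nat.le_induction with
      | base => simp
      | succ j hj ih =>
        rw [Finset.sum_range_succ, ih, (htail _ (hposlt (by omega))).2]
        push_cast
        ring
    have TAB : ∑ s ∈ Finset.range (j1+1), (a (i + s * n) : ℤ)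
        = ∑ s ∈ Finset.range (j1+1), (b (i + s * n) : ℤ) + 1 := by
      rw [Finset.sum_range_succ, Finset.sum_range_succ]
      have hcon : ∑ s ∈ Finset.range j1, (a (i + s * n) : ℤ)
          = ∑ s ∈ Finset.range j1, (b (i + s * n) : ℤ) :=
        Finset.sum_congr rfl (fun s hs => by
          rw [Finset.mem_range] at hs
          rw [hlt _ (by omega) (hposlt' hs)])
      rw [hcon, hj1, hm1]
      push_cast
      ring
    have hmz : (m : ℤ) = (i : ℤ) + (j1 : ℤ) * (n : ℤ) := by exact_mod_cast hj1.symm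
    have hSa : ∀ j, j1 ≤ j → S n i j a = S n i j1 a := by
      intro j hj
      have hMle : m ≤ i + j * n := by rw [← hj1]; exact hpos hj
      unfold S
      rw [SA _ hMle, TA j hj, hj1]
    have hSb : ∀ j, j1 ≤ j → S n i j b = S n i j1 a + 2 * ((j:ℤ) - (j1:ℤ)) * ((n:ℤ) - 1) := by
      intro j hj
      have hMle : m ≤ i + j * n := by rw [← hj1]; exact hpos hj
      unfold S
      rw [SB _ hMle, TB j hj, hj1, SAB, TAB]
      push_cast
      rw [hmz]
      ring
    have hperm : ∀ j, j1 ≤ j → xiPerm ^ (S n i j b) = xiPerm ^ (S n i j1 a) := by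
      intro j hj
      apply xiPerm_zpow_congr
      rw [hSb j hj]
      exact ⟨((j:ℤ) - (j1:ℤ)) * ((n:ℤ) - 1), by ring⟩
    have hperma : ∀ j, j1 ≤ j → xiPerm ^ (S n i j a) = xiPerm ^ (S n i j1 a) := by
      intro j hj
      rw [hSa j hj]
    set ε : ℝ := if Even (S n i j1 a) then (1:ℝ) else -1 with hε
    have hval : ∀ x y : ℝ, (xiPerm ^ (S n i j1 a)) x - (xiPerm ^ (S n i j1 a)) y = ε * (x - y) := by
      intro x y
      rw [xiPerm_zpow_apply, xiPerm_zpow_apply, hε]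
      split <;> ring
    have hDpre : ∀ j, j < j1 → f j - g j = 0 := by
      intro j hj
      have hjm : i + j * n < m := hposlt' hj
      have hS : S n i j a = S n i j b :=
        S_congr hi j (fun m' h1 h2 => hlt m' h1 (by omega))
      have hd : a (i + j * n) = b (i + j * n) := hlt _ (by omega) hjm
      simp [hf, hg, hS, hd]
    have hDj1 : f j1 - g j1 = ε / 3 ^ (j1 + 1) := by
      rw [hf, hg]
      simp only
      rw [div_sub_div_same, hperm j1 (le_refl j1), hperma j1 (le_refl j1), hval, hj1, hm1]
      push_cast
      ring_nf
    have hDgt : ∀ j, j1 < j → f j - g j = -2 * ε / 3 ^ (j + 1) := by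
      intro j hj
      have hgt : m < i + j * n := hposlt hj
      rw [hf, hg]
      simp only
      rw [div_sub_div_same, hperm j (by omega), hperma j (by omega),
          (htail _ hgt).1, (htail _ hgt).2, hval]
      push_cast
      ring_nf
    have hD : Summable (fun j => f j - g j) := hsf.sub hsg
    have hsub : xcoord n i a - xcoord n i b = ∑' j, (f j - g j) := (Summable.tsum_sub hsf hsg).symm
    have hsplit := hD.sum_add_tsum_nat_add j1
    have hfin : ∑ j ∈ Finset.range j1, (f j - g j) = 0 :=
      Finset.sum_eq_zero (fun j hj => hDpre j (Finset.mem_range.mp hj))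
    have hDtail : Summable (fun j => f (j + j1) - g (j + j1)) := (summable_nat_add_iff j1).mpr hD
    have hzsplit := hDtail.tsum_eq_zero_add
    simp only [zero_add] at hzsplit
    have htailval : ∑' j : ℕ, (f (j + 1 + j1) - g (j + 1 + j1)) = -ε / 3 ^ (j1 + 1) := by
      have hterm : ∀ j : ℕ, f (j + 1 + j1) - g (j + 1 + j1) = (-2 * ε / 3 ^ (j1 + 2)) * (1/3)^j := by
        intro j
        rw [hDgt _ (by omega)]
        rw [show j + 1 + j1 + 1 = j + (j1 + 2) by omega, pow_add, div_pow, one_pow]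
        field_simp
      rw [tsum_congr hterm, tsum_mul_left, tsum_geometric_of_lt_one (by norm_num) (by norm_num)]
      rw [pow_succ]
      field_simp
      ring
    rw [hfin, zero_add] at hsplit
    have : xcoord n i a - xcoord n i b = 0 := by
      rw [hsub, ← hsplit, hzsplit, htailval, hDj1]
      ring
    linarith
  · -- the position m is never sampled
    push_neg at hcase
    unfold xcoord
    refine tsum_congr (fun j => ?_)
    rcases lt_trichotomy (i + j * n) m with hjm | hjm | hjm
    · have hS : S n i j a = S n i j b :=
        S_congr hi j (fun m' h1 h2 => hlt m' h1 (by omega))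
      have hd : a (i + j * n) = b (i + j * n) := hlt _ (by omega) hjm
      rw [hS, hd]
    · exact absurd hjm (hcase j)
    · have hMle : m ≤ i + j * n := le_of_lt hjm
      have hT : ∑ s ∈ Finset.range (j+1), (a (i + s * n) : ℤ)
          - ∑ s ∈ Finset.range (j+1), (b (i + s * n) : ℤ)
          = 2 * ∑ s ∈ Finset.range (j+1), (if m < i + s * n then (-1:ℤ) else 0) := by
        rw [← Finset.sum_sub_distrib, Finset.mul_sum]
        refine Finset.sum_congr rfl (fun s _ => ?_)
        by_cases hs : m < i + s * n
        · rw [if_pos hs, (htail _ hs).1, (htail _ hs).2]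
          norm_num
        · have hlt' : i + s * n < m := lt_of_le_of_ne (not_lt.mp hs) (hcase s)
          rw [if_neg hs, hlt _ (by omega) hlt']
          ring
      have hSdiff : S n i j a - S n i j b
          = 1 - 2 * (((i + j * n : ℕ) : ℤ) - (m : ℤ))
            - 2 * ∑ s ∈ Finset.range (j+1), (if m < i + s * n then (-1:ℤ) else 0) := by
        unfold S
        rw [SA _ hMle, SB _ hMle, SAB]
        linear_combination -hT
      have hodd : ¬ Even (S n i j a - S n i j b) := by
        rw [hSdiff]
        rintro ⟨r, hr⟩
        omega
      rw [(htail _ hjm).1, (htail _ hjm).2]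
      push_cast
      rw [xiPerm_zpow_apply, xiPerm_zpow_apply]
      by_cases hA : Even (S n i j a)
      · have hB : ¬ Even (S n i j b) := fun hB => hodd (hA.sub hB)
        rw [if_pos hA, if_neg hB]
        norm_num
      · have hB : Even (S n i j b) := by
          rcases Int.even_or_odd (S n i j b) with h | h
          · exact h
          · exact absurd ((Int.not_even_iff_odd.mp hA).sub_odd h) hodd
        rw [if_neg hA, if_pos hB]
        norm_num

-- ### full well-definedness

lemma xcoord_well_defined {n i : ℕ} (hn : 1 ≤ n) (hi : 1 ≤ i) {a b : ℕ → ℕ}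
    (ha : IsDigitSeq a) (hb : IsDigitSeq b) (h : Phi a = Phi b) :
    xcoord n i a = xcoord n i b := by
  by_cases hab : ∀ k, 1 ≤ k → a k = b k
  · exact xcoord_congr hi hab
  · push_neg at hab
    obtain ⟨k0, hk01, hk0⟩ := hab
    have hex : ∃ k, 1 ≤ k ∧ a k ≠ b k := ⟨k0, hk01, hk0⟩
    classical
    set m := Nat.find hex with hmdef
    obtain ⟨hm1, hmne⟩ := Nat.find_spec hex
    have hmin : ∀ k, 1 ≤ k → k < m → a k = b k := by
      intro k h1 h2
      by_contra hc
      have hle : Nat.find hex ≤ k := Nat.find_le (h := hex) ⟨h1, hc⟩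
      omega
    rcases lt_or_gt_of_ne hmne with hlt | hgt
    · have hmin' : ∀ k, 1 ≤ k → k < m → b k = a k := fun k h1 h2 => (hmin k h1 h2).symm
      obtain ⟨hbm, htl⟩ := rep_structure hb ha h.symm hm1 hmin' hlt
      exact (xcoord_eq_of_structure hn hi hb ha hm1 hmin' hbm htl).symm
    · obtain ⟨ham, htl⟩ := rep_structure ha hb h hm1 hmin hgt
      exact xcoord_eq_of_structure hn hi ha hb hm1 hmin ham htl

-- ### prefix representations

noncomputable def padRep (mm N : ℕ) (r : ℝ) : ℕ → ℕ :=
  fun k => if k ≤ N then mm / 3 ^ (N - k) % 3 else ternaryDigit r (k - N)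

lemma padRep_isDigitSeq (mm N : ℕ) (r : ℝ) : IsDigitSeq (padRep mm N r) := by
  intro k
  unfold padRep
  split
  · exact Nat.lt_succ_iff.mp (Nat.mod_lt _ (by norm_num))
  · exact ternaryDigit_isDigitSeq r _

lemma nat_mod_pow_succ (m N : ℕ) : m % 3 ^ (N + 1) = m % 3 ^ N + (m / 3 ^ N % 3) * 3 ^ N := by
  have hP : 0 < 3 ^ N := Nat.pow_pos (by norm_num)
  have h1 : m = 3 ^ N * (m / 3 ^ N) + m % 3 ^ N := (Nat.div_add_mod m (3^N)).symm
  have h2 : m / 3 ^ N = 3 * (m / 3 ^ N / 3) + m / 3 ^ N % 3 := (Nat.div_add_mod _ 3).symm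
  have hbig : m = (m % 3 ^ N + (m / 3 ^ N % 3) * 3 ^ N) + 3 ^ (N+1) * (m / 3 ^ N / 3) := by
    conv_lhs => rw [h1, h2]
    rw [pow_succ]
    ring
  conv_lhs => rw [hbig]
  rw [Nat.add_mul_mod_self_left]
  apply Nat.mod_eq_of_lt
  have hd : m / 3 ^ N % 3 ≤ 2 := by omega
  have hmul : (m / 3 ^ N % 3) * 3 ^ N ≤ 2 * 3 ^ N := Nat.mul_le_mul_right _ hd
  have hmod : m % 3 ^ N < 3 ^ N := Nat.mod_lt _ hP
  rw [pow_succ]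
  linarith

lemma nat_digit_sum (N mm : ℕ) :
    ∑ j ∈ Finset.range N, (mm / 3 ^ j % 3) * 3 ^ j = mm % 3 ^ N := by
  induction N with
  | zero => simp [Nat.mod_one]
  | succ N ih => rw [Finset.sum_range_succ, ih, nat_mod_pow_succ]

lemma phi_padRep (N mm : ℕ) (hmm : mm < 3 ^ N) {r : ℝ} (h0 : 0 ≤ r) (h1 : r ≤ 1) :
    Phi (padRep mm N r) = ((mm : ℝ) + r) / 3 ^ N := by
  have hsum : Summable (fun k : ℕ => ((padRep mm N r (k+1) : ℝ)) / 3 ^ (k+1)) :=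
    summable_phi (padRep_isDigitSeq mm N r)
  unfold Phi
  rw [← hsum.sum_add_tsum_nat_add N]
  have htail : ∑' k : ℕ, ((padRep mm N r ((k + N) + 1) : ℝ)) / 3 ^ ((k + N) + 1)
      = r * (1 / 3 ^ N) := by
    have htailterm : ∀ k : ℕ, ((padRep mm N r ((k + N) + 1) : ℝ)) / 3 ^ ((k + N) + 1)
        = ((ternaryDigit r (k+1) : ℝ)) / 3 ^ (k+1) * (1 / 3 ^ N) := by
      intro k
      have hk : ¬ (k + N + 1 ≤ N) := by omega
      unfold padRep
      rw [if_neg hk, show k + N + 1 - N = k + 1 by omega]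
      rw [show k + N + 1 = (k+1) + N by omega, pow_add]
      field_simp
    rw [tsum_congr htailterm, tsum_mul_right]
    have : ∑' k : ℕ, ((ternaryDigit r (k+1) : ℝ)) / 3 ^ (k+1) = r := phi_ternaryDigit h0 h1
    rw [this]
  have hhead : ∑ k ∈ Finset.range N, ((padRep mm N r (k+1) : ℝ)) / 3 ^ (k+1)
      = (mm : ℝ) / 3 ^ N := by
    have hterm : ∀ k ∈ Finset.range N, ((padRep mm N r (k+1) : ℝ)) / 3 ^ (k+1)
        = ((mm / 3 ^ (N - 1 - k) % 3 : ℕ) : ℝ) * 3 ^ (N - 1 - k) / 3 ^ N := by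
      intro k hk
      have hkN : k < N := Finset.mem_range.mp hk
      unfold padRep
      rw [if_pos (by omega : k + 1 ≤ N), show N - (k+1) = N - 1 - k by omega]
      have hsplit : (3:ℝ)^N = 3 ^ (N - 1 - k) * 3 ^ (k+1) := by
        rw [← pow_add]
        congr 1
        omega
      rw [hsplit]
      field_simp
    rw [Finset.sum_congr rfl hterm,
      Finset.sum_range_reflect (fun j => ((mm / 3 ^ j % 3 : ℕ) : ℝ) * 3 ^ j / 3 ^ N) N]
    rw [← Finset.sum_div]
    have hnum : ∑ j ∈ Finset.range N, ((mm / 3 ^ j % 3 : ℕ) : ℝ) * (3:ℝ) ^ j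
        = ((mm % 3 ^ N : ℕ) : ℝ) := by
      rw [← nat_digit_sum N mm]
      push_cast
      ring
    rw [hnum, Nat.mod_eq_of_lt hmm]
  rw [htail, hhead]
  field_simp

-- ### the quantitative estimate on [0,1]

lemma peano_dist {n i : ℕ} (hn : 1 ≤ n) (hi : 1 ≤ i) {t u : ℝ}
    (ht : t ∈ Set.Icc (0:ℝ) 1) (hu : u ∈ Set.Icc (0:ℝ) 1) (k : ℕ) {a b : ℕ → ℕ}
    (ha : IsDigitSeq a) (hb : IsDigitSeq b) (hPa : Phi a = t) (hPb : Phi b = u)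
    (hagree : ∀ m, 1 ≤ m → m ≤ i + k * n → a m = b m) :
    |peanoCoord n i t - peanoCoord n i u| ≤ 1 / 3 ^ (k + 1) := by
  have h1 : peanoCoord n i t = xcoord n i a := by
    unfold peanoCoord
    exact xcoord_well_defined hn hi (ternaryDigit_isDigitSeq t) ha
      (by rw [phi_ternaryDigit ht.1 ht.2, hPa])
  have h2 : peanoCoord n i u = xcoord n i b := by
    unfold peanoCoord
    exact xcoord_well_defined hn hi (ternaryDigit_isDigitSeq u) hb
      (by rw [phi_ternaryDigit hu.1 hu.2, hPb])
  rw [h1, h2]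
  exact xcoord_dist hi k ha hb hagree

lemma peano_interval {n i : ℕ} (hn : 1 ≤ n) (hi : 1 ≤ i) (k : ℕ) {t u : ℝ}
    (ht : t ∈ Set.Icc (0:ℝ) 1) (hu : u ∈ Set.Icc (0:ℝ) 1) (mm : ℕ)
    (hmm : mm < 3 ^ (i + k * n))
    (h1 : (mm : ℝ) / 3 ^ (i + k * n) ≤ t) (h2 : t ≤ ((mm : ℝ) + 1) / 3 ^ (i + k * n))
    (h3 : (mm : ℝ) / 3 ^ (i + k * n) ≤ u) (h4 : u ≤ ((mm : ℝ) + 1) / 3 ^ (i + k * n)) :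
    |peanoCoord n i t - peanoCoord n i u| ≤ 1 / 3 ^ (k + 1) := by
  set N := i + k * n with hN
  have hP : (0:ℝ) < 3 ^ N := by positivity
  have hrt0 : 0 ≤ 3 ^ N * t - mm := by
    have := (div_le_iff₀ hP).mp h1
    nlinarith
  have hrt1 : 3 ^ N * t - mm ≤ 1 := by
    have := (le_div_iff₀ hP).mp h2
    nlinarith
  have hru0 : 0 ≤ 3 ^ N * u - mm := by
    have := (div_le_iff₀ hP).mp h3
    nlinarith
  have hru1 : 3 ^ N * u - mm ≤ 1 := by
    have := (le_div_iff₀ hP).mp h4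
    nlinarith
  have hPa : Phi (padRep mm N (3 ^ N * t - mm)) = t := by
    rw [phi_padRep N mm hmm hrt0 hrt1]
    field_simp
    ring
  have hPb : Phi (padRep mm N (3 ^ N * u - mm)) = u := by
    rw [phi_padRep N mm hmm hru0 hru1]
    field_simp
    ring
  have hagree : ∀ m', 1 ≤ m' → m' ≤ i + k * n →
      padRep mm N (3 ^ N * t - mm) m' = padRep mm N (3 ^ N * u - mm) m' := by
    intro m' _ hm'
    unfold padRep
    rw [if_pos (show m' ≤ N from hm'), if_pos (show m' ≤ N from hm')]
  exact peano_dist hn hi ht hu k (padRep_isDigitSeq _ _ _) (padRep_isDigitSeq _ _ _)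
    hPa hPb hagree


/-- each coordinate function `x_i` is continuous on `[0,1]`; quantitatively,
if `t` and `u` have ternary representations agreeing in the first `i + kn` digits, then
`|x_i(t) − x_i(u)| ≤ 3^{−(k+1)}`. -/
theorem peanoCoord_continuous (n i : ℕ) (hn : 2 ≤ n) (hi1 : 1 ≤ i) (hin : i ≤ n) :
    ContinuousOn (peanoCoord n i) (Set.Icc (0 : ℝ) 1) ∧
    ∀ t u : ℝ, t ∈ Set.Icc (0 : ℝ) 1 → u ∈ Set.Icc (0 : ℝ) 1 →
      ∀ k : ℕ, ∀ a b : ℕ → ℕ, IsDigitSeq a → IsDigitSeq b → Phi a = t → Phi b = u →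
        (∀ m, 1 ≤ m → m ≤ i + k * n → a m = b m) →
        |peanoCoord n i t - peanoCoord n i u| ≤ 1 / 3 ^ (k + 1) := by
  have hn1 : 1 ≤ n := by omega
  constructor
  · -- continuity
    intro t ht
    rw [Metric.continuousWithinAt_iff]
    intro ε hε
    obtain ⟨k, hk⟩ : ∃ k : ℕ, (1:ℝ) / 3 ^ (k + 1) < ε := by
      obtain ⟨k, hk⟩ := exists_pow_lt_of_lt_one hε (by norm_num : (1/3:ℝ) < 1)
      refine ⟨k, lt_of_le_of_lt ?_ hk⟩
      rw [div_pow, one_pow]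
      apply div_le_div_of_nonneg_left (by norm_num) (by positivity)
      exact pow_le_pow_right₀ (by norm_num) (by omega)
    set N := i + k * n with hN
    have hPnat : 1 ≤ 3 ^ N := Nat.one_le_pow _ _ (by norm_num)
    have hP : (0:ℝ) < 3 ^ N := by positivity
    set mm := min (⌊(3:ℝ) ^ N * t⌋.toNat) (3 ^ N - 1) with hmm
    have hmmlt : mm < 3 ^ N := lt_of_le_of_lt (min_le_right _ _) (by omega)
    have hfl0 : (0:ℤ) ≤ ⌊(3:ℝ) ^ N * t⌋ := Int.floor_nonneg.mpr (by nlinarith [ht.1])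
    have hlb : (mm : ℝ) / 3 ^ N ≤ t := by
      rw [div_le_iff₀ hP]
      have h1 : (mm : ℕ) ≤ ⌊(3:ℝ) ^ N * t⌋.toNat := min_le_left _ _
      have h2 : ((⌊(3:ℝ) ^ N * t⌋.toNat : ℕ) : ℝ) ≤ 3 ^ N * t := by
        have e : ((⌊(3:ℝ) ^ N * t⌋.toNat : ℕ) : ℝ) = ((⌊(3:ℝ) ^ N * t⌋ : ℤ) : ℝ) := by
          exact_mod_cast Int.toNat_of_nonneg hfl0
        rw [e]
        exact Int.floor_le _
      have h3 : ((mm : ℕ) : ℝ) ≤ ((⌊(3:ℝ) ^ N * t⌋.toNat : ℕ) : ℝ) := by exact_mod_cast h1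
      nlinarith
    have hub : t ≤ ((mm : ℝ) + 1) / 3 ^ N := by
      rw [le_div_iff₀ hP]
      rcases le_or_gt (⌊(3:ℝ) ^ N * t⌋.toNat) (3 ^ N - 1) with hc | hc
      · have hme : mm = ⌊(3:ℝ) ^ N * t⌋.toNat := min_eq_left hc
        have h2 : 3 ^ N * t < ((⌊(3:ℝ) ^ N * t⌋.toNat : ℕ) : ℝ) + 1 := by
          have e : ((⌊(3:ℝ) ^ N * t⌋.toNat : ℕ) : ℝ) = ((⌊(3:ℝ) ^ N * t⌋ : ℤ) : ℝ) := by
            exact_mod_cast Int.toNat_of_nonneg hfl0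
          rw [e]
          exact Int.lt_floor_add_one _
        rw [hme]
        nlinarith
      · have hme : mm = 3 ^ N - 1 := min_eq_right (by omega)
        have h2 : ((mm : ℕ) : ℝ) + 1 = 3 ^ N := by
          rw [hme, Nat.cast_sub hPnat]
          push_cast
          ring
        rw [h2]
        nlinarith [ht.2]
    by_cases hA : t < ((mm : ℝ) + 1) / 3 ^ N
    · by_cases hB : (mm : ℝ) / 3 ^ N < t
      · -- t in the interior of its interval
        refine ⟨min (t - (mm : ℝ) / 3 ^ N) (((mm : ℝ) + 1) / 3 ^ N - t),
          lt_min (by linarith) (by linarith), ?_⟩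
        intro u hu hdist
        rw [Real.dist_eq] at hdist
        have habs := abs_lt.mp hdist
        have hm1 := min_le_left (t - (mm : ℝ) / 3 ^ N) (((mm : ℝ) + 1) / 3 ^ N - t)
        have hm2 := min_le_right (t - (mm : ℝ) / 3 ^ N) (((mm : ℝ) + 1) / 3 ^ N - t)
        have hu1 : (mm : ℝ) / 3 ^ N ≤ u := by linarith [habs.1]
        have hu2 : u ≤ ((mm : ℝ) + 1) / 3 ^ N := by linarith [habs.2]
        rw [Real.dist_eq, abs_sub_comm]
        exact lt_of_le_of_lt
          (peano_interval hn1 hi1 k ht hu mm hmmlt hlb (le_of_lt hA) hu1 hu2) hk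
      · -- t is the left endpoint
        have hteq : t = (mm : ℝ) / 3 ^ N := le_antisymm (not_lt.mp hB) hlb
        refine ⟨1 / 3 ^ N, by positivity, ?_⟩
        intro u hu hdist
        rw [Real.dist_eq] at hdist
        have habs := abs_lt.mp hdist
        rw [Real.dist_eq, abs_sub_comm]
        rcases le_or_gt t u with hc | hc
        · have hu2 : u ≤ ((mm : ℝ) + 1) / 3 ^ N := by
            have hexp : ((mm : ℝ) + 1) / 3 ^ N = (mm : ℝ) / 3 ^ N + 1 / 3 ^ N := by ring
            rw [hexp]
            rw [hteq] at habs
            linarith [habs.2]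
          exact lt_of_le_of_lt
            (peano_interval hn1 hi1 k ht hu mm hmmlt hlb (le_of_lt hA)
              (by linarith) hu2) hk
        · -- u < t : use the interval to the left
          have hmm1 : 1 ≤ mm := by
            rcases Nat.eq_zero_or_pos mm with h0 | h0
            · exfalso
              rw [h0] at hteq
              norm_num at hteq
              have := hu.1
              linarith
            · exact h0
          have hcast : ((mm - 1 : ℕ) : ℝ) = (mm : ℝ) - 1 := by
            rw [Nat.cast_sub hmm1, Nat.cast_one]
          have hexp : ((mm : ℝ) - 1) / 3 ^ N = (mm : ℝ) / 3 ^ N - 1 / 3 ^ N := by ring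
          apply lt_of_le_of_lt
            (peano_interval hn1 hi1 k ht hu (mm - 1)
              (lt_of_le_of_lt (Nat.sub_le _ _) hmmlt) ?_ ?_ ?_ ?_) hk
          · rw [hcast, hexp, ← hteq]
            have h0 : (0:ℝ) < 1 / 3 ^ N := by positivity
            linarith
          · rw [hcast]
            have : (mm : ℝ) - 1 + 1 = (mm : ℝ) := by ring
            rw [this, ← hteq]
          · rw [hcast, hexp, ← hteq]
            linarith [habs.1]
          · rw [hcast]
            have : (mm : ℝ) - 1 + 1 = (mm : ℝ) := by ring
            rw [this, ← hteq]
            linarith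
    · -- t is the right endpoint
      have hteq : t = ((mm : ℝ) + 1) / 3 ^ N := le_antisymm hub (not_lt.mp hA)
      refine ⟨1 / 3 ^ N, by positivity, ?_⟩
      intro u hu hdist
      rw [Real.dist_eq] at hdist
      have habs := abs_lt.mp hdist
      rw [Real.dist_eq, abs_sub_comm]
      rcases le_or_gt u t with hc | hc
      · have hu1 : (mm : ℝ) / 3 ^ N ≤ u := by
          have hexp : ((mm : ℝ) + 1) / 3 ^ N - 1 / 3 ^ N = (mm : ℝ) / 3 ^ N := by ring
          rw [hteq] at habs
          linarith [habs.1]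
        exact lt_of_le_of_lt
          (peano_interval hn1 hi1 k ht hu mm hmmlt hlb hub hu1 (by linarith)) hk
      · -- u > t : use the interval to the right
        have ht1 : t < 1 := lt_of_lt_of_le hc hu.2
        have hmmlt2 : mm + 1 < 3 ^ N := by
          by_contra hcc
          have heq : mm + 1 = 3 ^ N := by omega
          have heqr : ((mm : ℝ) + 1) = (3:ℝ) ^ N := by
            have h' : ((mm + 1 : ℕ) : ℝ) = ((3 ^ N : ℕ) : ℝ) := by rw [heq]
            push_cast at h'
            linarith
          rw [heqr, div_self (ne_of_gt hP)] at hteq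
          linarith
        have hcast : ((mm + 1 : ℕ) : ℝ) = (mm : ℝ) + 1 := by push_cast; ring
        apply lt_of_le_of_lt
          (peano_interval hn1 hi1 k ht hu (mm + 1) hmmlt2 ?_ ?_ ?_ ?_) hk
        · rw [hcast, ← hteq]
        · rw [hcast, hteq]
          have h0 : (0:ℝ) < 1 / 3 ^ N := by positivity
          have hexp : ((mm : ℝ) + 1 + 1) / 3 ^ N = ((mm : ℝ) + 1) / 3 ^ N + 1 / 3 ^ N := by ring
          linarith
        · rw [hcast, ← hteq]
          linarith
        · rw [hcast]
          have hexp : ((mm : ℝ) + 1 + 1) / 3 ^ N = ((mm : ℝ) + 1) / 3 ^ N + 1 / 3 ^ N := by ring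
          rw [hexp, ← hteq]
          linarith [habs.2]
  · intro t u ht hu k a b ha hb hPa hPb hagree
    exact peano_dist hn1 hi1 ht hu k ha hb hPa hPb hagree
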